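/- Let D_1 = ∂/∂q_1 and M_2 = (1/2) Σ_{i+j≥3, i,j≥1} q_i q_j (i+j-2) ∂/∂q_{i+j-2} + (1/2) Σ_{i,j≥1} q_{i+j+2} i j ∂²/(∂q_i ∂q_j). Then the commutator [D_1, M_2] = D_1 ∘ M_2 - M_2 ∘ D_1 equals Λ_1 = Σ_{i≥2} (i-1) q_i ∂/∂q_{i-1}. -/

import Mathlib

open MvPolynomial

/-- Λ₁ = Σ_{i≥2} (i-1) q_i ∂/∂q_{i-1}, reindexed by i = j+1. -/
noncomputable def Lam1 (f : MvPolynomial ℕ ℚ) : MvPolynomial ℕ ℚ :=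
  ∑ᶠ j : ℕ, (j : ℚ) • (X (j + 1) * pderiv j f)

/-- M_a = ½ Σ_{i,j≥1, i+j-a≥1} (i+j-a) q_i q_j ∂/∂q_{i+j-a}
        + ½ Σ_{i,j≥1} i j q_{i+j+a} ∂²/∂q_i∂q_j. -/
noncomputable def M (a : ℕ) (f : MvPolynomial ℕ ℚ) : MvPolynomial ℕ ℚ :=
  (1 / 2 : ℚ) •
    ((∑ᶠ i : ℕ, ∑ᶠ j : ℕ,
        if 1 ≤ i ∧ 1 ≤ j ∧ 1 ≤ i + j - a then
          ((i + j - a : ℕ) : ℚ) • (X i * X j * pderiv (i + j - a) f)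
        else 0) +
      (∑ᶠ i : ℕ, ∑ᶠ j : ℕ,
        ((i : ℚ) * (j : ℚ)) • (X (i + j + a) * pderiv i (pderiv j f))))

lemma pd_comm (i j : ℕ) (f : MvPolynomial ℕ ℚ) :
    pderiv i (pderiv j f) = pderiv j (pderiv i f) := by
  induction f using MvPolynomial.induction_on' with
  | add p q hp hq => simp [hp, hq]
  | monomial s a =>
    rcases eq_or_ne i j with rfl | hij
    · rfl
    · simp only [pderiv_monomial]
      have he : s - Finsupp.single j 1 - Finsupp.single i 1
          = s - Finsupp.single i 1 - Finsupp.single j 1 := by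
        ext k
        simp only [Finsupp.coe_tsub, Pi.sub_apply]
        omega
      rw [he]
      congr 1
      rw [Finsupp.tsub_apply, Finsupp.tsub_apply,
        Finsupp.single_eq_of_ne hij, Finsupp.single_eq_of_ne hij.symm]
      simp only [Nat.sub_zero]
      ring

/-- `M 2` written as a finite double sum, given a bound on the variables. -/
lemma M_eq (g : MvPolynomial ℕ ℚ) (N : ℕ) (hz : ∀ k, N ≤ k → pderiv k g = 0) :
    M 2 g = (1 / 2 : ℚ) •
      ((∑ i ∈ Finset.range (N + 2), ∑ j ∈ Finset.range (N + 2),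
          if 1 ≤ i ∧ 1 ≤ j ∧ 1 ≤ i + j - 2 then
            ((i + j - 2 : ℕ) : ℚ) • (X i * X j * pderiv (i + j - 2) g)
          else 0) +
        ∑ i ∈ Finset.range (N + 2), ∑ j ∈ Finset.range (N + 2),
          ((i : ℚ) * (j : ℚ)) • (X (i + j + 2) * pderiv i (pderiv j g))) := by
  unfold M
  congr 1
  congr 1
  · -- the A part
    have hinner : ∀ i : ℕ, (∑ᶠ j : ℕ,
        if 1 ≤ i ∧ 1 ≤ j ∧ 1 ≤ i + j - 2 then
          ((i + j - 2 : ℕ) : ℚ) • (X i * X j * pderiv (i + j - 2) g)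
        else 0) = ∑ j ∈ Finset.range (N + 2),
        if 1 ≤ i ∧ 1 ≤ j ∧ 1 ≤ i + j - 2 then
          ((i + j - 2 : ℕ) : ℚ) • (X i * X j * pderiv (i + j - 2) g)
        else 0 := by
      intro i
      apply finsum_eq_sum_of_support_subset
      intro j hj
      simp only [Function.mem_support] at hj
      simp only [Finset.coe_range, Set.mem_Iio]
      by_contra hjN
      push_neg at hjN
      apply hj
      split_ifs with hc
      · rw [hz (i + j - 2) (by omega), mul_zero, smul_zero]
      · rfl
    rw [funext hinner]
    apply finsum_eq_sum_of_support_subset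
    intro i hi
    simp only [Function.mem_support] at hi
    simp only [Finset.coe_range, Set.mem_Iio]
    by_contra hiN
    push_neg at hiN
    apply hi
    apply Finset.sum_eq_zero
    intro j _
    split_ifs with hc
    · rw [hz (i + j - 2) (by omega), mul_zero, smul_zero]
    · rfl
  · -- the B part
    have hinner : ∀ i : ℕ, (∑ᶠ j : ℕ,
        ((i : ℚ) * (j : ℚ)) • (X (i + j + 2) * pderiv i (pderiv j g))) =
        ∑ j ∈ Finset.range (N + 2),
          ((i : ℚ) * (j : ℚ)) • (X (i + j + 2) * pderiv i (pderiv j g)) := by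
      intro i
      apply finsum_eq_sum_of_support_subset
      intro j hj
      simp only [Function.mem_support] at hj
      simp only [Finset.coe_range, Set.mem_Iio]
      by_contra hjN
      push_neg at hjN
      apply hj
      rw [hz j (by omega), map_zero, mul_zero, smul_zero]
    rw [funext hinner]
    apply finsum_eq_sum_of_support_subset
    intro i hi
    simp only [Function.mem_support] at hi
    simp only [Finset.coe_range, Set.mem_Iio]
    by_contra hiN
    push_neg at hiN
    apply hi
    apply Finset.sum_eq_zero
    intro j _
    rw [pd_comm, hz i (by omega), map_zero, mul_zero, smul_zero]

/-- [∂/∂q₁, M₂] = Λ₁ as operators on ℚ[q₁, q₂, …]. -/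
theorem commutator_D1_M2 :
    ∀ f : MvPolynomial ℕ ℚ, pderiv 1 (M 2 f) - M 2 (pderiv 1 f) = Lam1 f := by
  intro f
  set N : ℕ := f.vars.sup id + 1 with hNdef
  have hz : ∀ k, N ≤ k → pderiv k f = 0 := by
    intro k hk
    apply pderiv_eq_zero_of_notMem_vars
    intro hmem
    have h2 := Finset.le_sup (f := id) hmem
    simp only [id_eq] at h2
    omega
  have hz1 : ∀ k, N ≤ k → pderiv k (pderiv 1 f) = 0 := by
    intro k hk
    rw [pd_comm, hz k hk, map_zero]
  have hLam : Lam1 f = ∑ m ∈ Finset.range (N + 2), (m : ℚ) • (X (m + 1) * pderiv m f) := by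
    apply finsum_eq_sum_of_support_subset
    intro m hm
    simp only [Function.mem_support] at hm
    simp only [Finset.coe_range, Set.mem_Iio]
    by_contra hmN
    push_neg at hmN
    exact hm (by rw [hz m (by omega), mul_zero, smul_zero])
  rw [M_eq f N hz, M_eq (pderiv 1 f) N hz1, hLam]
  rw [Derivation.map_smul, ← smul_sub, map_add, map_sum, map_sum]
  rw [add_sub_add_comm, ← Finset.sum_sub_distrib, ← Finset.sum_sub_distrib]
  -- the second-derivative part vanishes
  have hB : (∑ i ∈ Finset.range (N + 2),
      (pderiv 1 (∑ j ∈ Finset.range (N + 2),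
          ((i : ℚ) * (j : ℚ)) • (X (i + j + 2) * pderiv i (pderiv j f))) -
       ∑ j ∈ Finset.range (N + 2),
          ((i : ℚ) * (j : ℚ)) • (X (i + j + 2) * pderiv i (pderiv j (pderiv 1 f))))) = 0 := by
    apply Finset.sum_eq_zero
    intro i _
    rw [map_sum, ← Finset.sum_sub_distrib]
    apply Finset.sum_eq_zero
    intro j _
    rw [Derivation.map_smul, pderiv_mul, pderiv_X_of_ne (by omega), zero_mul, zero_add,
      pd_comm 1 i, pd_comm 1 j, sub_self]
  rw [hB, add_zero]
  -- the first part
  have hterm : ∀ i j : ℕ,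
      pderiv 1 (if 1 ≤ i ∧ 1 ≤ j ∧ 1 ≤ i + j - 2 then
          ((i + j - 2 : ℕ) : ℚ) • (X i * X j * pderiv (i + j - 2) f) else 0) -
      (if 1 ≤ i ∧ 1 ≤ j ∧ 1 ≤ i + j - 2 then
          ((i + j - 2 : ℕ) : ℚ) • (X i * X j * pderiv (i + j - 2) (pderiv 1 f)) else 0) =
      (if i = 1 ∧ 2 ≤ j then ((j - 1 : ℕ) : ℚ) • (X j * pderiv (j - 1) f) else 0) +
      (if j = 1 ∧ 2 ≤ i then ((i - 1 : ℕ) : ℚ) • (X i * pderiv (i - 1) f) else 0) := by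
    intro i j
    split_ifs with hc h1 h2 h2
    · -- hc, h1 : i = 1 ∧ 2 ≤ j, h2 : j = 1 ∧ 2 ≤ i : impossible
      omega
    · -- hc, h1, ¬h2 : i = 1
      obtain ⟨rfl, hj⟩ := h1
      have hk : 1 + j - 2 = j - 1 := by omega
      rw [hk, Derivation.map_smul, pderiv_mul, pderiv_mul, pderiv_X_self,
        pderiv_X_of_ne (show j ≠ 1 by omega), pd_comm (j - 1) 1 f, ← smul_sub, add_zero]
      congr 1
      ring
    · -- hc, ¬h1, h2 : j = 1
      obtain ⟨rfl, hi⟩ := h2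
      have hk : i + 1 - 2 = i - 1 := by omega
      rw [hk, Derivation.map_smul, pderiv_mul, pderiv_mul, pderiv_X_self,
        pderiv_X_of_ne (show i ≠ 1 by omega), pd_comm (i - 1) 1 f, ← smul_sub, zero_add]
      congr 1
      ring
    · -- hc, ¬h1, ¬h2 : i ≠ 1 and j ≠ 1
      rw [Derivation.map_smul, pderiv_mul, pderiv_mul,
        pderiv_X_of_ne (show i ≠ 1 by omega), pderiv_X_of_ne (show j ≠ 1 by omega),
        pd_comm (i + j - 2) 1 f]
      simp
    all_goals first
      | omega
      | (simp only [map_zero, sub_zero, add_zero])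
  have hA : (∑ i ∈ Finset.range (N + 2),
      (pderiv 1 (∑ j ∈ Finset.range (N + 2),
          if 1 ≤ i ∧ 1 ≤ j ∧ 1 ≤ i + j - 2 then
            ((i + j - 2 : ℕ) : ℚ) • (X i * X j * pderiv (i + j - 2) f) else 0) -
       ∑ j ∈ Finset.range (N + 2),
          if 1 ≤ i ∧ 1 ≤ j ∧ 1 ≤ i + j - 2 then
            ((i + j - 2 : ℕ) : ℚ) • (X i * X j * pderiv (i + j - 2) (pderiv 1 f)) else 0)) =
      ∑ i ∈ Finset.range (N + 2), ∑ j ∈ Finset.range (N + 2),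
        ((if i = 1 ∧ 2 ≤ j then ((j - 1 : ℕ) : ℚ) • (X j * pderiv (j - 1) f) else 0) +
         (if j = 1 ∧ 2 ≤ i then ((i - 1 : ℕ) : ℚ) • (X i * pderiv (i - 1) f) else 0)) := by
    apply Finset.sum_congr rfl
    intro i _
    rw [map_sum, ← Finset.sum_sub_distrib]
    exact Finset.sum_congr rfl fun j _ => hterm i j
  rw [hA]
  set S : MvPolynomial ℕ ℚ := ∑ m ∈ Finset.range (N + 2), (m : ℚ) • (X (m + 1) * pderiv m f)
    with hS
  have hStrunc : S = ∑ m ∈ Finset.range (N + 1), (m : ℚ) • (X (m + 1) * pderiv m f) := by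
    rw [hS, Finset.sum_range_succ, hz (N + 1) (by omega), mul_zero, smul_zero, add_zero]
  have hshift : (∑ j ∈ Finset.range (N + 2),
      if 2 ≤ j then ((j - 1 : ℕ) : ℚ) • (X j * pderiv (j - 1) f) else 0) = S := by
    rw [Finset.sum_range_succ' (fun j => if 2 ≤ j then
      ((j - 1 : ℕ) : ℚ) • (X j * pderiv (j - 1) f) else 0) (N + 1)]
    simp only [Nat.add_sub_cancel, if_neg (by omega : ¬ (2 ≤ 0)), add_zero]
    rw [hStrunc]
    apply Finset.sum_congr rfl
    intro m _
    rcases Nat.eq_zero_or_pos m with rfl | hm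
    · simp
    · rw [if_pos (by omega)]
  simp only [Finset.sum_add_distrib]
  have hP1 : (∑ i ∈ Finset.range (N + 2), ∑ j ∈ Finset.range (N + 2),
      if i = 1 ∧ 2 ≤ j then ((j - 1 : ℕ) : ℚ) • (X j * pderiv (j - 1) f) else 0) = S := by
    rw [Finset.sum_eq_single 1]
    · simp only [true_and]
      exact hshift
    · intro b _ hb
      apply Finset.sum_eq_zero
      intro j _
      rw [if_neg (by tauto)]
    · intro h
      exact absurd (Finset.mem_range.mpr (by omega)) h
  have hP2 : (∑ i ∈ Finset.range (N + 2), ∑ j ∈ Finset.range (N + 2),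
      if j = 1 ∧ 2 ≤ i then ((i - 1 : ℕ) : ℚ) • (X i * pderiv (i - 1) f) else 0) = S := by
    have hinner : ∀ i : ℕ, (∑ j ∈ Finset.range (N + 2),
        if j = 1 ∧ 2 ≤ i then ((i - 1 : ℕ) : ℚ) • (X i * pderiv (i - 1) f) else 0) =
        if 2 ≤ i then ((i - 1 : ℕ) : ℚ) • (X i * pderiv (i - 1) f) else 0 := by
      intro i
      simp only [ite_and]
      rw [Finset.sum_ite_eq' (Finset.range (N + 2)) 1
        (fun _ => if 2 ≤ i then ((i - 1 : ℕ) : ℚ) • (X i * pderiv (i - 1) f) else 0)]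
      rw [if_pos (Finset.mem_range.mpr (by omega))]
    simp only [hinner]
    exact hshift
  rw [hP1, hP2, ← two_smul ℚ S, smul_smul]
  norm_num
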